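/- Let D < 0 be a fundamental discriminant, k = ℚ(√D), and 𝔞 a nonzero fractional ideal of k. For every τ in the complex upper half-plane ℍ, the family (e(N(a)τ/N(𝔞)))_{a ∈ 𝔞} is summable, and the resulting function θ_𝔞 : ℍ → ℂ, θ_𝔞(τ) = Σ_{a ∈ 𝔞} e(N(a)τ/N(𝔞)), is holomorphic on ℍ. -/

import Mathlib

open NumberField
open scoped nonZeroDivisors

lemma exists_conj_embedding (k : Type) [Field k] [NumberField k]
    (hDneg : NumberField.discr k < 0) :
    ∃ σ : k →ₐ[ℚ] ℂ, (starRingEnd ℂ : ℂ →+* ℂ).toRatAlgHom.comp σ ≠ σ := by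
  by_contra hcon
  push_neg at hcon
  have hcard : Fintype.card (Module.Free.ChooseBasisIndex ℤ (𝓞 k)) = Fintype.card (k →ₐ[ℚ] ℂ) := by
    rw [AlgHom.card, ← Module.finrank_eq_card_basis (integralBasis k)]
  let e := Fintype.equivOfCardEq hcard
  set M := Algebra.embeddingsMatrixReindex ℚ ℂ (integralBasis k) e with hM
  have hdet : algebraMap ℚ ℂ (Algebra.discr ℚ (integralBasis k)) = M.det ^ 2 :=
    Algebra.discr_eq_det_embeddingsMatrixReindex_pow_two ℚ ℂ (integralBasis k) e
  have hconj : (starRingEnd ℂ) M.det = M.det := by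
    rw [RingHom.map_det]
    congr 1
    ext i j
    show (starRingEnd ℂ) (M i j) = M i j
    have : M i j = e j (integralBasis k i) := rfl
    rw [this]
    exact DFunLike.congr_fun (hcon (e j)) (integralBasis k i)
  have hre : M.det = ((M.det.re : ℝ) : ℂ) := (Complex.conj_eq_iff_re.mp hconj).symm
  rw [← coe_discr, eq_ratCast, hre] at hdet
  have h2 : (NumberField.discr k : ℝ) = M.det.re ^ 2 := by exact_mod_cast hdet
  have h3 : ((NumberField.discr k : ℝ)) < 0 := by exact_mod_cast hDneg
  nlinarith [sq_nonneg M.det.re]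

lemma exists_embedding_norm_eq (k : Type) [Field k] [NumberField k]
    (hdeg : Module.finrank ℚ k = 2) (hDneg : NumberField.discr k < 0) :
    ∃ σ : k →ₐ[ℚ] ℂ,
      (∀ x : k, ((Algebra.norm ℚ x : ℚ) : ℂ) = (Complex.normSq (σ x) : ℂ)) ∧
      ∃ α : k, (σ α).im ≠ 0 := by
  classical
  obtain ⟨σ, hσ⟩ := exists_conj_embedding k hDneg
  set σ₂ := (starRingEnd ℂ : ℂ →+* ℂ).toRatAlgHom.comp σ with hσ₂
  have hcard : Fintype.card (k →ₐ[ℚ] ℂ) = 2 := by rw [AlgHom.card, hdeg]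
  have huniv : (Finset.univ : Finset (k →ₐ[ℚ] ℂ)) = {σ, σ₂} := by
    symm
    apply Finset.eq_univ_of_card
    rw [Finset.card_pair (Ne.symm hσ), hcard]
  refine ⟨σ, fun x => ?_, ?_⟩
  · have h := Algebra.norm_eq_prod_embeddings ℚ ℂ x
    rw [eq_ratCast] at h
    rw [h, huniv, Finset.prod_pair (Ne.symm hσ)]
    have : σ₂ x = (starRingEnd ℂ) (σ x) := rfl
    rw [this, Complex.mul_conj]
  · by_contra hc
    push_neg at hc
    exact hσ (AlgHom.ext fun x => by
      have : σ₂ x = (starRingEnd ℂ) (σ x) := rfl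
      rw [this, Complex.conj_eq_iff_im.mpr (hc x)])

lemma summable_int_gauss (d : ℝ) (hd : 0 < d) :
    Summable fun n : ℤ => Real.exp (-(d * (n : ℝ) ^ 2)) := by
  have hr1 : Real.exp (-d) < 1 := Real.exp_lt_one_iff.mpr (by linarith)
  have hgeo : Summable fun n : ℕ => Real.exp (-d) ^ n :=
    summable_geometric_of_lt_one (Real.exp_pos _).le hr1
  have hg : Summable fun n : ℤ => Real.exp (-d) ^ n.natAbs := by
    apply Summable.of_nat_of_neg_add_one
    · simpa using hgeo
    · have : ∀ n : ℕ, (-1 + -(n:ℤ)).natAbs = n + 1 := by intro n; omega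
      simpa [this] using (summable_nat_add_iff 1).mpr hgeo
  refine Summable.of_nonneg_of_le (fun n => (Real.exp_pos _).le) (fun n => ?_) hg
  have h1 : (n.natAbs : ℝ) ≤ (n : ℝ) ^ 2 := by
    have h2 : ((n.natAbs : ℝ)) ≤ ((n.natAbs : ℝ)) ^ 2 := by
      exact_mod_cast Nat.le_self_pow two_ne_zero n.natAbs
    calc (n.natAbs : ℝ) ≤ ((n.natAbs : ℝ)) ^ 2 := h2
    _ = (n : ℝ) ^ 2 := by push_cast [Nat.cast_natAbs]; rw [sq_abs]
  calc Real.exp (-(d * (n : ℝ) ^ 2)) ≤ Real.exp ((n.natAbs : ℝ) * (-d)) := by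
        apply Real.exp_le_exp.mpr; nlinarith
  _ = Real.exp (-d) ^ n.natAbs := by rw [← Real.exp_nat_mul]

lemma core_summable (k : Type) [Field k] [NumberField k]
    (hdeg : Module.finrank ℚ k = 2)
    (𝔞 : FractionalIdeal (𝓞 k)⁰ k) (h𝔞 : 𝔞 ≠ 0) (σ : k →ₐ[ℚ] ℂ)
    (α : k) (hα : (σ α).im ≠ 0) (c : ℝ) (hc : 0 < c) :
    Summable fun a : (𝔞 : Submodule (𝓞 k) k) =>
      Real.exp (-(c * Complex.normSq (σ (a : k)))) := by
  classical
  have hcard : Fintype.card (Module.Free.ChooseBasisIndex ℤ 𝔞) = 2 := by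
    have h := fractionalIdeal_rank k (Units.mk0 𝔞 h𝔞)
    simp only [Units.val_mk0] at h
    rw [← Module.finrank_eq_card_chooseBasisIndex]; exact h.trans (by rw [RingOfIntegers.rank, hdeg])
  let eF : Module.Free.ChooseBasisIndex ℤ 𝔞 ≃ Fin 2 :=
    Fintype.equivOfCardEq (by rw [hcard, Fintype.card_fin])
  let b : Module.Basis (Fin 2) ℤ (𝔞 : Submodule (𝓞 k) k) := (fractionalIdealBasis k 𝔞).reindex eF
  set w : Fin 2 → k := fun i => ((b i : k)) with hw
  have hindZ : LinearIndependent ℤ w := by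
    have h2 := b.linearIndependent.map'
      ((𝔞 : Submodule (𝓞 k) k).subtype.restrictScalars ℤ)
      (by rw [LinearMap.ker_eq_bot]; exact Subtype.coe_injective)
    exact h2
  have hindQ : LinearIndependent ℚ w := (LinearIndependent.iff_fractionRing ℤ ℚ).mp hindZ
  let Bk : Module.Basis (Fin 2) ℚ k :=
    basisOfLinearIndependentOfCardEqFinrank hindQ (by rw [Fintype.card_fin, hdeg])
  set v : Fin 2 → ℂ := fun i => σ (w i) with hv
  have hmem : ∀ x : k, σ x ∈ Submodule.span ℝ (Set.range v) := by
    intro x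
    have hx : x = ∑ i, Bk.repr x i • Bk i := (Bk.sum_repr x).symm
    rw [hx, map_sum]
    apply Submodule.sum_mem
    intro i _
    have h1 : σ (Bk.repr x i • Bk i) = ((Bk.repr x i : ℝ)) • σ (Bk i) := by
      rw [Rat.smul_def, map_mul, map_ratCast, Complex.real_smul]
      norm_cast
    rw [h1]
    apply Submodule.smul_mem
    apply Submodule.subset_span
    refine ⟨i, ?_⟩
    have h2 : Bk i = w i := by
      rw [show (Bk : Fin 2 → k) = w from coe_basisOfLinearIndependentOfCardEqFinrank _ _]
    rw [h2]
  have hv2 : LinearIndependent ℝ v := by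
    rw [linearIndependent_iff_card_eq_finrank_span, Fintype.card_fin]
    have hle : (Set.range v).finrank ℝ ≤ 2 := by
      have h := Submodule.finrank_le (Submodule.span ℝ (Set.range v))
      rwa [Complex.finrank_real_complex] at h
    have hpair : LinearIndependent ℝ ![(1 : ℂ), σ α] := by
      rw [linearIndependent_fin2]
      constructor
      · simp only [Matrix.cons_val_one, Matrix.head_cons, Matrix.cons_val_zero]
        intro h; rw [h] at hα; simp at hα
      · intro a h
        simp only [Matrix.cons_val_one, Matrix.head_cons, Matrix.cons_val_zero] at h
        have him := congrArg Complex.im h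
        rw [Complex.smul_im, Complex.one_im] at him
        rcases mul_eq_zero.mp him with h' | h'
        · rw [h', zero_smul] at h; exact one_ne_zero h.symm
        · exact hα h'
    have hge : 2 ≤ (Set.range v).finrank ℝ := by
      have h1 : Submodule.span ℝ (Set.range ![(1 : ℂ), σ α]) ≤
          Submodule.span ℝ (Set.range v) := by
        rw [Submodule.span_le]
        rintro z ⟨i, rfl⟩
        fin_cases i
        · simpa using hmem 1
        · simpa using hmem α
      have h2 := finrank_span_eq_card hpair
      rw [Fintype.card_fin] at h2
      calc 2 = (Set.range ![(1 : ℂ), σ α]).finrank ℝ := h2.symm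
      _ ≤ (Set.range v).finrank ℝ := Submodule.finrank_mono h1
    omega
  let B2 : Module.Basis (Fin 2) ℝ ℂ := basisOfLinearIndependentOfCardEqFinrank hv2
    (by rw [Fintype.card_fin, Complex.finrank_real_complex])
  let φ : ℂ →L[ℝ] (Fin 2 → ℝ) := LinearMap.toContinuousLinearMap B2.equivFun.toLinearMap
  set C : ℝ := ‖φ‖ + 1 with hC
  have hC0 : 0 < C := by positivity
  set d : ℝ := c / (2 * C ^ 2) with hd
  have hd0 : 0 < d := by positivity
  have hB2 : ∀ i, B2 i = v i := fun i => by
    rw [show (B2 : Fin 2 → ℂ) = v from coe_basisOfLinearIndependentOfCardEqFinrank _ _]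
  have hφ : ∀ m : Fin 2 → ℤ, ∀ i, |(m i : ℝ)| ≤ C * ‖∑ j, (m j : ℝ) • v j‖ := by
    intro m i
    have hz : (∑ j, (m j : ℝ) • v j) = B2.equivFun.symm (fun j => (m j : ℝ)) := by
      rw [Module.Basis.equivFun_symm_apply]
      exact Finset.sum_congr rfl fun j _ => by rw [hB2]
    have h3 : φ (∑ j, (m j : ℝ) • v j) = fun j => (m j : ℝ) := by
      have : φ (∑ j, (m j : ℝ) • v j) = B2.equivFun (B2.equivFun.symm fun j => (m j : ℝ)) := by
        rw [hz]; rfl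
      rw [this, LinearEquiv.apply_symm_apply]
    calc |(m i : ℝ)| = ‖(fun j => (m j : ℝ)) i‖ := (Real.norm_eq_abs _).symm
    _ ≤ ‖(fun j => (m j : ℝ))‖ := by
        have h4 := norm_le_pi_norm (fun j => (m j : ℝ)) i
        simpa using h4
    _ = ‖φ (∑ j, (m j : ℝ) • v j)‖ := by rw [h3]
    _ ≤ ‖φ‖ * ‖∑ j, (m j : ℝ) • v j‖ := φ.le_opNorm _
    _ ≤ C * ‖∑ j, (m j : ℝ) • v j‖ := by
        apply mul_le_mul_of_nonneg_right _ (norm_nonneg _); linarith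
  let E := b.equivFun
  have hkey : ∀ m : Fin 2 → ℤ, σ ((E.symm m : (𝔞 : Submodule (𝓞 k) k)) : k)
      = ∑ i, (m i : ℝ) • v i := by
    intro m
    have h1 : (E.symm m : (𝔞 : Submodule (𝓞 k) k)) = ∑ i, m i • b i := by
      rw [show E.symm m = _ from Module.Basis.equivFun_symm_apply b m]
    have h2 : ((E.symm m : (𝔞 : Submodule (𝓞 k) k)) : k) = ∑ i, m i • w i := by
      rw [h1]; push_cast; rfl
    rw [h2, map_sum]
    exact Finset.sum_congr rfl fun i _ => by
      rw [map_zsmul, ← Int.cast_smul_eq_zsmul ℝ]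
  have hG : Summable fun m : Fin 2 → ℤ =>
      Real.exp (-(d * (m 0 : ℝ) ^ 2)) * Real.exp (-(d * (m 1 : ℝ) ^ 2)) := by
    have hG0 := (summable_int_gauss d hd0).mul_of_nonneg (summable_int_gauss d hd0)
      (fun _ => (Real.exp_pos _).le) (fun _ => (Real.exp_pos _).le)
    exact ((Equiv.summable_iff (finTwoArrowEquiv ℤ)).mpr hG0).congr (fun m => rfl)
  have hfinal : Summable fun m : Fin 2 → ℤ =>
      Real.exp (-(c * Complex.normSq (∑ i, (m i : ℝ) • v i))) := by
    refine Summable.of_nonneg_of_le (fun m => (Real.exp_pos _).le) (fun m => ?_) hG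
    rw [← Real.exp_add]
    apply Real.exp_le_exp.mpr
    set z : ℂ := ∑ j, (m j : ℝ) • v j with hz
    have hns : Complex.normSq z = ‖z‖ ^ 2 := by
      rw [← Complex.sq_norm]
    have e0 : (m 0 : ℝ) ^ 2 ≤ C ^ 2 * ‖z‖ ^ 2 := by
      have := hφ m 0; nlinarith [abs_nonneg ((m 0 : ℝ)), norm_nonneg z, sq_abs ((m 0 : ℝ))]
    have e1 : (m 1 : ℝ) ^ 2 ≤ C ^ 2 * ‖z‖ ^ 2 := by
      have := hφ m 1; nlinarith [abs_nonneg ((m 1 : ℝ)), norm_nonneg z, sq_abs ((m 1 : ℝ))]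
    have hsum : (m 0 : ℝ) ^ 2 + (m 1 : ℝ) ^ 2 ≤ 2 * C ^ 2 * Complex.normSq z := by
      rw [hns]; nlinarith
    have h2d : d * (2 * C ^ 2) = c := by
      rw [hd]; field_simp
    nlinarith [hd0.le, mul_le_mul_of_nonneg_left hsum hd0.le]
  have hcomp : (fun a : (𝔞 : Submodule (𝓞 k) k) =>
        Real.exp (-(c * Complex.normSq (σ (a : k))))) ∘ (E.toEquiv.symm)
      = fun m => Real.exp (-(c * Complex.normSq (∑ i, (m i : ℝ) • v i))) := by
    funext m
    have he : (E.toEquiv.symm m) = E.symm m := rfl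
    simp only [Function.comp_apply]
    rw [he, hkey m]
  exact (Equiv.summable_iff E.toEquiv.symm).mp (hcomp ▸ hfinal)

lemma norm_term_eq (r : ℝ) (τ : ℂ) :
    ‖Complex.exp (2 * Real.pi * Complex.I * (r : ℂ) * τ)‖
      = Real.exp (-(2 * Real.pi * r * τ.im)) := by
  rw [Complex.norm_exp]
  congr 1
  simp [Complex.mul_re, Complex.mul_im]

/-- The theta function of a fractional ideal `𝔞` of an imaginary quadratic field:
`θ_𝔞(τ) = Σ_{a ∈ 𝔞} e(N(a)τ/N(𝔞))`, where `e(z) = exp(2πiz)`. -/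
noncomputable def idealTheta (k : Type) [Field k] [NumberField k]
    (𝔞 : FractionalIdeal (𝓞 k)⁰ k) (τ : ℂ) : ℂ :=
  ∑' a : (𝔞 : Submodule (𝓞 k) k),
    Complex.exp (2 * Real.pi * Complex.I *
      ((Algebra.norm ℚ (a : k) / FractionalIdeal.absNorm 𝔞 : ℚ) : ℂ) * τ)

/-- Let `D < 0` be a fundamental discriminant, `k = ℚ(√D)`, and `𝔞` a nonzero
fractional ideal of `k`.  For every `τ` in the complex upper half-plane the family
`(e(N(a)τ/N(𝔞)))_{a ∈ 𝔞}` is summable, and the resulting function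
`θ_𝔞(τ) = Σ_{a ∈ 𝔞} e(N(a)τ/N(𝔞))` is holomorphic on the upper half-plane. -/
theorem idealTheta_summable_and_holomorphic
    (D : ℤ) (hDneg : D < 0)
    (k : Type) [Field k] [NumberField k]
    (hdeg : Module.finrank ℚ k = 2) (hdisc : NumberField.discr k = D)
    (𝔞 : FractionalIdeal (𝓞 k)⁰ k) (h𝔞 : 𝔞 ≠ 0) :
    (∀ τ : ℂ, 0 < τ.im →
      Summable fun a : (𝔞 : Submodule (𝓞 k) k) =>
        Complex.exp (2 * Real.pi * Complex.I *
          ((Algebra.norm ℚ (a : k) / FractionalIdeal.absNorm 𝔞 : ℚ) : ℂ) * τ)) ∧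
    DifferentiableOn ℂ (idealTheta k 𝔞) {τ : ℂ | 0 < τ.im} := by
  have hDneg' : NumberField.discr k < 0 := by rw [hdisc]; exact hDneg
  obtain ⟨σ, hnorm, α, hα⟩ := exists_embedding_norm_eq k hdeg hDneg'
  set N : ℚ := FractionalIdeal.absNorm 𝔞 with hNdef
  have hN0 : 0 < N := by
    rcases lt_or_eq_of_le (FractionalIdeal.absNorm_nonneg 𝔞) with h | h
    · exact h
    · exact absurd (FractionalIdeal.absNorm_eq_zero_iff.mp h.symm) h𝔞
  have hNR : 0 < (N : ℝ) := by exact_mod_cast hN0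
  -- the rational coefficient as a real number
  have hq : ∀ a : k, ((Algebra.norm ℚ a / N : ℚ) : ℂ)
      = ((Complex.normSq (σ a) / (N : ℝ) : ℝ) : ℂ) := by
    intro a
    push_cast
    rw [hnorm a]
  -- norm of each term
  have hterm : ∀ (a : k) (τ : ℂ),
      ‖Complex.exp (2 * Real.pi * Complex.I * ((Algebra.norm ℚ a / N : ℚ) : ℂ) * τ)‖
        = Real.exp (-(2 * Real.pi * (Complex.normSq (σ a) / (N : ℝ)) * τ.im)) := by
    intro a τ
    rw [hq a, norm_term_eq]
  have hsum : ∀ τ : ℂ, 0 < τ.im →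
      Summable fun a : (𝔞 : Submodule (𝓞 k) k) =>
        Complex.exp (2 * Real.pi * Complex.I *
          ((Algebra.norm ℚ (a : k) / N : ℚ) : ℂ) * τ) := by
    intro τ hτ
    apply Summable.of_norm
    have hc : (0:ℝ) < 2 * Real.pi * τ.im / (N : ℝ) := by positivity
    refine (core_summable k hdeg 𝔞 h𝔞 σ α hα _ hc).congr (fun a => ?_)
    rw [hterm (a : k) τ]
    congr 1
    ring
  constructor
  · exact hsum
  · intro τ₀ hτ₀
    have hτ₀' : 0 < τ₀.im := hτ₀
    set t : ℝ := τ₀.im / 2 with ht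
    have ht0 : 0 < t := by positivity
    have hU : IsOpen {τ : ℂ | t < τ.im} := isOpen_lt continuous_const Complex.continuous_im
    have hc : (0:ℝ) < 2 * Real.pi * t / (N : ℝ) := by positivity
    have hDO : DifferentiableOn ℂ (idealTheta k 𝔞) {τ : ℂ | t < τ.im} := by
      apply Complex.differentiableOn_tsum_of_summable_norm
        (u := fun a : (𝔞 : Submodule (𝓞 k) k) =>
          Real.exp (-(2 * Real.pi * t / (N : ℝ) * Complex.normSq (σ (a : k)))))
        (core_summable k hdeg 𝔞 h𝔞 σ α hα _ hc)
        (fun a => Differentiable.differentiableOn (by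
          exact (differentiable_id.const_mul _).cexp))
        hU
      intro a τ hτU
      rw [hterm (a : k) τ]
      apply Real.exp_le_exp.mpr
      have hs : 0 ≤ Complex.normSq (σ (a : k)) / (N : ℝ) :=
        div_nonneg (Complex.normSq_nonneg _) hNR.le
      have htle : t ≤ τ.im := le_of_lt hτU
      have hfac : (0:ℝ) ≤ 2 * Real.pi * (Complex.normSq (σ (a : k)) / (N : ℝ)) := by positivity
      have hkey2 := mul_le_mul_of_nonneg_left htle hfac
      ring_nf at hkey2 ⊢
      linarith
    refine (hDO.differentiableAt (hU.mem_nhds ?_)).differentiableWithinAt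
    show t < τ₀.im
    rw [ht]; linarith
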